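/- Let ε ∈ [0,1] and let μ, ν be probability measures on metric spaces X and Y. If there exists an isometry T : X → Y with ‖T_♯μ − ν‖_TV ≤ ε, then GW^ε(μ,ν) = 0. -/

import Mathlib

open MeasureTheory

/-- Quadratic GW distortion cost of a (partial) coupling `π` on `X × Y`:
`E_{π⊗π}[(d_X(x,x')² − d_Y(y,y')²)²]^{1/2}`. -/
noncomputable def gwCost {X Y : Type*} [MetricSpace X] [MetricSpace Y]
    [MeasurableSpace X] [MeasurableSpace Y] (π : Measure (X × Y)) : ℝ :=
  Real.sqrt (∫ q, (dist q.1.1 q.2.1 ^ 2 - dist q.1.2 q.2.2 ^ 2) ^ 2 ∂(π.prod π))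

/-- Quadratic Gromov-Wasserstein distance. -/
noncomputable def GW {X Y : Type*} [MetricSpace X] [MetricSpace Y]
    [MeasurableSpace X] [MeasurableSpace Y] (μ : Measure X) (ν : Measure Y) : ℝ :=
  sInf (gwCost '' {π : Measure (X × Y) |
    π.map Prod.fst = μ ∧ π.map Prod.snd = ν})

/-- Partial Gromov-Wasserstein distance with trimming parameter `ε`:
infimum over partial couplings of total mass `1 − ε` with marginals dominated by `μ, ν`. -/
noncomputable def PGW {X Y : Type*} [MetricSpace X] [MetricSpace Y]
    [MeasurableSpace X] [MeasurableSpace Y] (ε : ℝ) (μ : Measure X) (ν : Measure Y) : ℝ :=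
  sInf (gwCost '' {π : Measure (X × Y) |
    π.map Prod.fst ≤ μ ∧ π.map Prod.snd ≤ ν ∧ π Set.univ = ENNReal.ofReal (1 - ε)})

/-- Total variation distance `sup_A |μ(A) − ν(A)|`. -/
noncomputable def tvDist {X : Type*} [MeasurableSpace X] (μ ν : Measure X) : ℝ :=
  sSup {r : ℝ | ∃ A : Set X, MeasurableSet A ∧ r = |(μ A).toReal - (ν A).toReal|}

/-- GW-resilience `ρ(μ, ε) = sup{GW(μ', μ) : μ' ≤ μ/(1−ε)}`. -/
noncomputable def resilience {X : Type*} [MetricSpace X] [MeasurableSpace X]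
    (μ : Measure X) (ε : ℝ) : ℝ :=
  sSup {r : ℝ | ∃ μ' : Measure X, IsProbabilityMeasure μ' ∧
    μ' ≤ ENNReal.ofReal (1 / (1 - ε)) • μ ∧ r = GW μ' μ}

theorem stmt4 {X Y : Type*} [MetricSpace X] [MetricSpace Y]
    [MeasurableSpace X] [MeasurableSpace Y]
    (ε : ℝ) (hε : ε ∈ Set.Icc (0 : ℝ) 1)
    (μ : Measure X) (ν : Measure Y)
    (hμ : IsProbabilityMeasure μ) (hν : IsProbabilityMeasure ν)
    (T : X → Y) (hT : Isometry T) (hTm : Measurable T)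
    (htv : tvDist (μ.map T) ν ≤ ε) :
    PGW ε μ ν = 0 := by
  obtain ⟨hε0, hε1⟩ := hε
  set μt : Measure Y := μ.map T with hμtdef
  haveI hμtprob : IsProbabilityMeasure μt := Measure.isProbabilityMeasure_map hTm.aemeasurable
  obtain ⟨A, hA, hA1, hA2⟩ := hahn_decomposition (μ := μt) (ν := ν)
  set m : Measure Y := ν.restrict A + μt.restrict Aᶜ with hmdef
  haveI : IsFiniteMeasure m := by rw [hmdef]; infer_instance
  have hmμt : m ≤ μt := by
    rw [Measure.le_iff]
    intro s hs
    have h1 : m s = ν (s ∩ A) + μt (s \ A) := by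
      rw [hmdef]
      simp only [Measure.coe_add, Pi.add_apply, Measure.restrict_apply hs, ← Set.diff_eq]
    have h2 : ν (s ∩ A) ≤ μt (s ∩ A) := hA1 _ (hs.inter hA) Set.inter_subset_right
    have h3 : μt (s ∩ A) + μt (s \ A) = μt s := measure_inter_add_diff s hA
    rw [h1]
    calc ν (s ∩ A) + μt (s \ A) ≤ μt (s ∩ A) + μt (s \ A) := add_le_add_left h2 _
      _ = μt s := h3
  have hmν : m ≤ ν := by
    rw [Measure.le_iff]
    intro s hs
    have h1 : m s = ν (s ∩ A) + μt (s \ A) := by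
      rw [hmdef]
      simp only [Measure.coe_add, Pi.add_apply, Measure.restrict_apply hs, ← Set.diff_eq]
    have h2 : μt (s \ A) ≤ ν (s \ A) := by
      refine hA2 _ (hs.diff hA) ?_
      rw [Set.diff_eq]
      exact Set.inter_subset_right
    have h3 : ν (s ∩ A) + ν (s \ A) = ν s := measure_inter_add_diff s hA
    rw [h1]
    calc ν (s ∩ A) + μt (s \ A) ≤ ν (s ∩ A) + ν (s \ A) := add_le_add_right h2 _
      _ = ν s := h3
  -- mass lower bound
  have htvA : (μt A).toReal - (ν A).toReal ≤ ε := by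
    have hub : ∀ r ∈ {r : ℝ | ∃ B : Set Y, MeasurableSet B ∧
        r = |(μt B).toReal - (ν B).toReal|}, r ≤ 1 := by
      rintro r ⟨B, hB, rfl⟩
      have h1 : (μt B).toReal ≤ 1 := by
        have := prob_le_one (μ := μt) (s := B)
        simpa using ENNReal.toReal_mono (by simp) this
      have h2 : (ν B).toReal ≤ 1 := by
        have := prob_le_one (μ := ν) (s := B)
        simpa using ENNReal.toReal_mono (by simp) this
      have h3 : (0:ℝ) ≤ (μt B).toReal := ENNReal.toReal_nonneg
      have h4 : (0:ℝ) ≤ (ν B).toReal := ENNReal.toReal_nonneg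
      rw [abs_le]; constructor <;> linarith
    have hmem : |(μt A).toReal - (ν A).toReal| ∈ {r : ℝ | ∃ B : Set Y, MeasurableSet B ∧
        r = |(μt B).toReal - (ν B).toReal|} := ⟨A, hA, rfl⟩
    have := le_csSup ⟨1, hub⟩ hmem
    have habs : (μt A).toReal - (ν A).toReal ≤ |(μt A).toReal - (ν A).toReal| := le_abs_self _
    calc (μt A).toReal - (ν A).toReal ≤ _ := habs
      _ ≤ tvDist (μ.map T) ν := this
      _ ≤ ε := htv
  have hmuniv : ENNReal.ofReal (1 - ε) ≤ m Set.univ := by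
    have hcompl : (μt Aᶜ).toReal = 1 - (μt A).toReal := by
      have h := measure_compl hA (measure_ne_top μt A)
      rw [h, measure_univ, ENNReal.toReal_sub_of_le (prob_le_one) (by simp)]
      simp
    have h1 : m Set.univ = ν A + μt Aᶜ := by
      rw [hmdef]
      simp [Measure.restrict_apply_univ]
    have h2 : (1:ℝ) - ε ≤ (m Set.univ).toReal := by
      rw [h1, ENNReal.toReal_add (measure_ne_top _ _) (measure_ne_top _ _), hcompl]
      linarith
    calc ENNReal.ofReal (1 - ε) ≤ ENNReal.ofReal (m Set.univ).toReal :=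
          ENNReal.ofReal_le_ofReal h2
      _ = m Set.univ := ENNReal.ofReal_toReal (measure_ne_top _ _)
  -- Radon-Nikodym pullback
  have hac : m ≪ μt := Measure.absolutelyContinuous_of_le hmμt
  set g : Y → ENNReal := m.rnDeriv μt with hgdef
  have hgmeas : Measurable g := Measure.measurable_rnDeriv m μt
  have hgm : μt.withDensity g = m := Measure.withDensity_rnDeriv_eq m μt hac
  have hg1 : g ≤ᵐ[μt] 1 := Measure.rnDeriv_le_one_of_le hmμt
  set σ0 : Measure X := μ.withDensity (fun x => g (T x)) with hσ0def
  have hσ0map : σ0.map T = m := by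
    ext s hs
    rw [Measure.map_apply hTm hs, hσ0def, withDensity_apply _ (hTm hs),
      ← setLIntegral_map hs hgmeas hTm, ← withDensity_apply _ hs, ← hμtdef, hgm]
  have hσ0le : σ0 ≤ μ := by
    have hgT1 : (fun x => g (T x)) ≤ᵐ[μ] 1 := by
      have hset : MeasurableSet {y : Y | g y ≤ 1} :=
        measurableSet_le hgmeas measurable_const
      exact (ae_map_iff hTm.aemeasurable hset).mp hg1
    calc σ0 = μ.withDensity (fun x => g (T x)) := rfl
      _ ≤ μ.withDensity 1 := withDensity_mono hgT1
      _ = μ := withDensity_one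
  haveI : IsFiniteMeasure σ0 := isFiniteMeasure_of_le μ hσ0le
  have hσ0univ : σ0 Set.univ = m Set.univ := by
    rw [← hσ0map, Measure.map_apply hTm MeasurableSet.univ, Set.preimage_univ]
  -- scale to mass 1 - ε
  set c : ENNReal := ENNReal.ofReal (1 - ε) / σ0 Set.univ with hcdef
  have hc1 : c ≤ 1 := ENNReal.div_le_of_le_mul (by rw [one_mul, hσ0univ]; exact hmuniv)
  set σ : Measure X := c • σ0 with hσdef
  have hσle0 : σ ≤ σ0 := by
    rw [Measure.le_iff]
    intro s hs
    rw [hσdef, Measure.smul_apply, smul_eq_mul]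
    calc c * σ0 s ≤ 1 * σ0 s := by gcongr
      _ = σ0 s := one_mul _
  have hσle : σ ≤ μ := hσle0.trans hσ0le
  haveI : IsFiniteMeasure σ := isFiniteMeasure_of_le μ hσle
  have hσuniv : σ Set.univ = ENNReal.ofReal (1 - ε) := by
    rw [hσdef, Measure.smul_apply, smul_eq_mul, hcdef]
    by_cases h0 : σ0 Set.univ = 0
    · have : ENNReal.ofReal (1 - ε) = 0 := by
        refine le_antisymm ?_ zero_le
        rw [← h0, hσ0univ]; rw [hσ0univ] at h0; exact h0 ▸ hmuniv
      simp [h0, this]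
    · exact ENNReal.div_mul_cancel h0 (measure_ne_top σ0 _)
  have hσmapT : σ.map T ≤ ν := by
    have : σ.map T = c • m := by
      rw [hσdef, Measure.map_smul, hσ0map]
    rw [this]
    calc c • m ≤ (1 : ENNReal) • m := by
          rw [Measure.le_iff]; intro s hs
          simp only [Measure.smul_apply, smul_eq_mul]
          gcongr
      _ = m := one_smul _ _
      _ ≤ ν := hmν
  -- the graph coupling
  set e : X → X × Y := fun x => (x, T x) with hedef
  have hem : Measurable e := measurable_id.prodMk hTm
  set π : Measure (X × Y) := σ.map e with hπdef
  haveI : IsFiniteMeasure π := by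
    rw [hπdef]; infer_instance
  have hπfst : π.map Prod.fst = σ := by
    rw [hπdef, Measure.map_map measurable_fst hem]
    have : (Prod.fst ∘ e) = id := rfl
    rw [this, Measure.map_id]
  have hπsnd : π.map Prod.snd = σ.map T := by
    rw [hπdef, Measure.map_map measurable_snd hem]
    rfl
  have hπuniv : π Set.univ = ENNReal.ofReal (1 - ε) := by
    rw [hπdef, Measure.map_apply hem MeasurableSet.univ, Set.preimage_univ, hσuniv]
  -- zero cost
  have hcost : gwCost π = 0 := by
    unfold gwCost
    have hint : (∫ q, (dist q.1.1 q.2.1 ^ 2 - dist q.1.2 q.2.2 ^ 2) ^ 2 ∂(π.prod π)) = 0 := by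
      have hprod : π.prod π = (σ.prod σ).map (Prod.map e e) := by
        rw [hπdef]
        exact Measure.map_prod_map σ σ hem hem
      by_cases hi : Integrable
          (fun q : (X × Y) × (X × Y) => (dist q.1.1 q.2.1 ^ 2 - dist q.1.2 q.2.2 ^ 2) ^ 2)
          (π.prod π)
      · rw [hprod] at hi ⊢
        rw [integral_map (hem.prodMap hem).aemeasurable hi.aestronglyMeasurable]
        have : ∀ p : X × X,
            (dist (Prod.map e e p).1.1 (Prod.map e e p).2.1 ^ 2 -
              dist (Prod.map e e p).1.2 (Prod.map e e p).2.2 ^ 2) ^ 2 = 0 := by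
          intro p
          simp [hedef, Prod.map, hT.dist_eq]
        simp only [this, integral_zero]
      · exact integral_undef hi
    rw [hint, Real.sqrt_zero]
  -- conclude
  have hmem : (0:ℝ) ∈ gwCost '' {π' : Measure (X × Y) |
      π'.map Prod.fst ≤ μ ∧ π'.map Prod.snd ≤ ν ∧ π' Set.univ = ENNReal.ofReal (1 - ε)} :=
    ⟨π, ⟨by rw [hπfst]; exact hσle, by rw [hπsnd]; exact hσmapT, hπuniv⟩, hcost⟩
  have hlb : ∀ r ∈ gwCost '' {π' : Measure (X × Y) |
      π'.map Prod.fst ≤ μ ∧ π'.map Prod.snd ≤ ν ∧ π' Set.univ = ENNReal.ofReal (1 - ε)},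
      (0:ℝ) ≤ r := by
    rintro r ⟨π', _, rfl⟩
    exact Real.sqrt_nonneg _
  exact le_antisymm (csInf_le ⟨0, hlb⟩ hmem) (le_csInf ⟨0, hmem⟩ hlb)
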